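/- arXiv:2101.06080 — 2 statements merged into one kernel-verified Lean document; each statement's English description precedes it below -/
import Mathlib

section
/- Two words u, v over {1,2} of the same length n have equal recording tableaux Q(u) = Q(v) under RSK if and only if the paired positions of u and v coincide and the letters at these paired positions agree; equivalently, u and v agree at every position that is paired (in the bracketing procedure) in either word, and the set of paired positions is the same for both. -/
open MeasureTheory ProbabilityTheory

namespace RSKpaper

/-- Insert a letter into a row (Schensted row insertion); returns the new row
and the bumped letter, if any. -/
def rowInsert (r : List ℕ) (a : ℕ) : List ℕ × Option ℕ :=
  match r.findIdx? (fun b => decide (a < b)) with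
  | none => (r ++ [a], none)
  | some i => (r.set i a, r[i]?)

/-- Insert a letter into a tableau (list of rows). -/
def tabInsert : List (List ℕ) → ℕ → List (List ℕ)
  | [], a => [[a]]
  | r :: rs, a =>
    match rowInsert r a with
    | (r', none) => r' :: rs
    | (r', some b) => r' :: tabInsert rs b

/-- The RSK insertion tableau `P(w)` of a word. -/
def Ptab (w : List ℕ) : List (List ℕ) := w.foldl tabInsert ([] : List (List ℕ))

/-- The shape of the RSK tableaux of a word, as the list of row lengths. -/
def shape (w : List ℕ) : List ℕ := (Ptab w).map List.length

/-- The RSK recording tableau `Q(w)`: the entry `i+1` is placed in the row in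
which the shape grows when the `(i+1)`-st letter is inserted. -/
def Qtab (w : List ℕ) : List (List ℕ) :=
  (List.range w.length).foldl (fun q i =>
    let s1 := shape (w.take i)
    let s2 := shape (w.take (i + 1))
    let j := (List.range s2.length).findIdx
      (fun r => decide (s2.getD r 0 ≠ s1.getD r 0))
    if j < q.length then q.set j (q.getD j ([] : List ℕ) ++ [i + 1]) else q ++ [[i + 1]]) ([] : List (List ℕ))

/-- Iterated bracketing of factors `21` in a two–letter word, 1-based positions:
returns the stack of positions of currently unmatched `2`'s together with the
list of bracketed pairs `(position of 2, position of 1)`. -/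
def bracketFold (w : List ℕ) : List ℕ × List (ℕ × ℕ) :=
  (w.zipIdx.map Prod.swap).foldl (fun st p =>
    if p.2 = 2 then ((p.1 + 1) :: st.1, st.2)
    else
      match st.1 with
      | [] => st
      | j :: rest => (rest, (j, p.1 + 1) :: st.2)) ([], [])

/-- The rank `r(w)`: the number of bracketed `21`-pairs. -/
def rank (w : List ℕ) : ℕ := (bracketFold w).2.length

/-- The set of paired (bracketed) 1-based positions of a two-letter word. -/
def pairedPositions (w : List ℕ) : Finset ℕ :=
  ((bracketFold w).2.map (fun p => p.1)).toFinset ∪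
    ((bracketFold w).2.map (fun p => p.2)).toFinset

/-- The set of free (unbracketed) 1-based positions of a two-letter word. -/
def freePositions (w : List ℕ) : Finset ℕ :=
  (Finset.Icc 1 w.length) \ pairedPositions w

/-- The 1-based positions of the free `1`'s of a two-letter word. -/
def freeOnePositions (w : List ℕ) : Finset ℕ :=
  (freePositions w).filter (fun i => w.getD (i - 1) 0 = 1)

/-- The initial segment `[x]_n` of an infinite sequence, as a word. -/
def pre (n : ℕ) (x : ℕ → ℕ) : List ℕ := (List.range n).map x

/-- A two–letter Bernoulli ensemble: coordinates are i.i.d. with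
`P(1) = p₁`, `P(2) = p₂`. -/
def IsBernoulli2 (μ : Measure (ℕ → ℕ)) (p₁ p₂ : ℝ) : Prop :=
  IsProbabilityMeasure μ ∧
    iIndepFun (fun n (x : ℕ → ℕ) => x n) μ ∧
    (∀ n : ℕ, μ {x | x n = 1} = ENNReal.ofReal p₁) ∧
    (∀ n : ℕ, μ {x | x n = 2} = ENNReal.ofReal p₂) ∧
    p₁ + p₂ = 1

/-- A `k`-letter Bernoulli ensemble with letter probabilities `p 1 ≥ … ≥ p k`. -/
def IsBernoulliK (μ : Measure (ℕ → ℕ)) (k : ℕ) (p : ℕ → ℝ) : Prop :=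
  IsProbabilityMeasure μ ∧
    iIndepFun (fun n (x : ℕ → ℕ) => x n) μ ∧
    (∀ n i : ℕ, μ {x | x n = i} = ENNReal.ofReal (p i)) ∧
    (∀ i : ℕ, i < 1 ∨ k < i → p i = 0) ∧
    (∀ i : ℕ, 1 ≤ i → i < k → p (i + 1) ≤ p i) ∧
    0 < p k ∧ (∑ i ∈ Finset.Icc 1 k, p i) = 1


lemma bracketFold_snoc (w : List ℕ) (x : ℕ) :
    bracketFold (w ++ [x]) =
      if x = 2 then ((w.length + 1) :: (bracketFold w).1, (bracketFold w).2)
      else match (bracketFold w).1 with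
        | [] => bracketFold w
        | j :: rest => (rest, (j, w.length + 1) :: (bracketFold w).2) := by
  unfold bracketFold
  rw [List.zipIdx_append, List.map_append, List.foldl_append]
  simp

def St (w : List ℕ) (t : ℕ) : List ℕ := (bracketFold (w.take t)).1
def Pr (w : List ℕ) (t : ℕ) : List (ℕ × ℕ) := (bracketFold (w.take t)).2
def rk (w : List ℕ) (t : ℕ) : ℕ := (Pr w t).length

lemma take_succ_getD (w : List ℕ) (t : ℕ) (ht : t < w.length) :
    w.take (t+1) = w.take t ++ [w.getD t 0] := by
  rw [List.take_succ, List.getD_eq_getElem?_getD, List.getElem?_eq_getElem ht]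
  simp

lemma getD_mem (w : List ℕ) (t : ℕ) (ht : t < w.length) : w.getD t 0 ∈ w := by
  rw [List.getD_eq_getElem?_getD, List.getElem?_eq_getElem ht]
  exact List.getElem_mem ht

lemma step_cases (w : List ℕ) (t : ℕ) (ht : t < w.length)
    (hx : w.getD t 0 = 1 ∨ w.getD t 0 = 2) :
    (w.getD t 0 = 2 ∧ St w (t+1) = (t+1) :: St w t ∧ Pr w (t+1) = Pr w t) ∨
    (w.getD t 0 = 1 ∧ ∃ j rest, St w t = j :: rest ∧ St w (t+1) = rest ∧
        Pr w (t+1) = (j, t+1) :: Pr w t) ∨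
    (w.getD t 0 = 1 ∧ St w t = [] ∧ St w (t+1) = [] ∧ Pr w (t+1) = Pr w t) := by
  have hlt : (w.take t).length = t := by
    rw [List.length_take]; omega
  have h1 : bracketFold (w.take (t+1)) = bracketFold (w.take t ++ [w.getD t 0]) := by
    rw [take_succ_getD w t ht]
  rcases hx with hx | hx
  · rw [hx] at h1
    rcases hS : (bracketFold (w.take t)).1 with _ | ⟨j, rest⟩
    · have h2 : bracketFold (w.take (t+1)) = bracketFold (w.take t) := by
        rw [h1, bracketFold_snoc, if_neg (by norm_num), hS]
      right; right
      exact ⟨hx, hS, by simp only [St]; rw [h2, hS], by simp only [Pr]; rw [h2]⟩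
    · have h2 : bracketFold (w.take (t+1)) = (rest, (j, t+1) :: (bracketFold (w.take t)).2) := by
        rw [h1, bracketFold_snoc, if_neg (by norm_num), hS, hlt]
      right; left
      exact ⟨hx, j, rest, hS, by simp only [St]; rw [h2], by simp only [Pr]; rw [h2]⟩
  · have h2 : bracketFold (w.take (t+1)) =
        ((t + 1) :: (bracketFold (w.take t)).1, (bracketFold (w.take t)).2) := by
      rw [h1, bracketFold_snoc, if_pos hx, hlt]
    exact Or.inl ⟨hx, by simp only [St]; rw [h2], by simp only [Pr]; rw [h2]⟩

lemma rk_zero (w : List ℕ) : rk w 0 = 0 := by simp [rk, Pr, bracketFold]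

lemma rk_succ_ge (w : List ℕ) (i : ℕ) (h : w.length ≤ i) : rk w (i+1) = rk w i := by
  unfold rk Pr
  rw [List.take_of_length_le h, List.take_of_length_le (by omega)]

lemma rk_succ_cases (w : List ℕ) (t : ℕ) (ht : t < w.length)
    (hx : w.getD t 0 = 1 ∨ w.getD t 0 = 2) :
    rk w (t+1) = rk w t ∨ rk w (t+1) = rk w t + 1 := by
  rcases step_cases w t ht hx with ⟨_, _, h⟩ | ⟨_, j, rest, _, _, h⟩ | ⟨_, _, _, h⟩ <;>
    simp [rk, h]

lemma bf_bounds (w : List ℕ) :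
    (∀ j ∈ (bracketFold w).1, 1 ≤ j ∧ j ≤ w.length) ∧
    (∀ p ∈ (bracketFold w).2, 1 ≤ p.1 ∧ p.1 < p.2 ∧ p.2 ≤ w.length) := by
  induction w using List.reverseRecOn with
  | nil => simp [bracketFold]
  | append_singleton w x ih =>
    obtain ⟨ih1, ih2⟩ := ih
    rw [bracketFold_snoc]
    have hL : (w ++ [x]).length = w.length + 1 := by simp
    by_cases hx : x = 2
    · rw [if_pos hx]
      constructor
      · intro j hj
        rcases List.mem_cons.mp hj with rfl | hj
        · omega
        · have := ih1 j hj; omega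
      · intro p hp
        have := ih2 p hp; omega
    · rw [if_neg hx]
      generalize hS : (bracketFold w).1 = S
      rcases S with _ | ⟨j, rest⟩
      · refine ⟨fun j hj => ?_, fun p hp => ?_⟩
        · rw [hS] at hj; simp at hj
        · have := ih2 p hp; omega
      · refine ⟨fun k hk => ?_, fun p hp => ?_⟩
        · have : k ∈ (bracketFold w).1 := by rw [hS]; exact List.mem_cons_of_mem _ hk
          have := ih1 k this; omega
        · rcases List.mem_cons.mp hp with rfl | hp
          · have : j ∈ (bracketFold w).1 := by rw [hS]; exact List.mem_cons_self
            have := ih1 j this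
            simp only [hL]
            omega
          · have := ih2 p hp; omega

lemma bf_letters (w : List ℕ) (hw : ∀ a ∈ w, a = 1 ∨ a = 2) :
    (∀ j ∈ (bracketFold w).1, w.getD (j-1) 0 = 2) ∧
    (∀ p ∈ (bracketFold w).2, w.getD (p.1-1) 0 = 2 ∧ w.getD (p.2-1) 0 = 1) := by
  induction w using List.reverseRecOn with
  | nil => simp [bracketFold]
  | append_singleton w x ih =>
    have hw' : ∀ a ∈ w, a = 1 ∨ a = 2 := fun a ha => hw a (by simp [ha])
    obtain ⟨ih1, ih2⟩ := ih hw'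
    have hold : ∀ k, k < w.length → (w ++ [x]).getD k 0 = w.getD k 0 := by
      intro k hk
      rw [List.getD_eq_getElem?_getD, List.getD_eq_getElem?_getD,
        List.getElem?_append_left hk]
    have hnew : (w ++ [x]).getD w.length 0 = x := by
      rw [List.getD_eq_getElem?_getD]
      simp
    have hb := bf_bounds w
    rw [bracketFold_snoc]
    by_cases hx : x = 2
    · rw [if_pos hx]
      constructor
      · intro j hj
        rcases List.mem_cons.mp hj with rfl | hj
        · simpa [hnew] using hx
        · have hbj := hb.1 j hj
          rw [hold _ (by omega)]; exact ih1 j hj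
      · intro p hp
        have hbp := hb.2 p hp
        rw [hold _ (by omega), hold _ (by omega)]
        exact ih2 p hp
    · rw [if_neg hx]
      have hx1 : x = 1 := by
        rcases hw x (by simp) with h | h
        · exact h
        · exact absurd h hx
      generalize hS : (bracketFold w).1 = S
      rcases S with _ | ⟨j, rest⟩
      · refine ⟨fun k hk => ?_, fun p hp => ?_⟩
        · rw [hS] at hk; simp at hk
        · have hbp := hb.2 p hp
          rw [hold _ (by omega), hold _ (by omega)]
          exact ih2 p hp
      · have hmemj : j ∈ (bracketFold w).1 := by rw [hS]; exact List.mem_cons_self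
        refine ⟨fun k hk => ?_, fun p hp => ?_⟩
        · have hk' : k ∈ (bracketFold w).1 := by rw [hS]; exact List.mem_cons_of_mem _ hk
          have hbk := hb.1 k hk'
          rw [hold _ (by omega)]; exact ih1 k hk'
        · rcases List.mem_cons.mp hp with rfl | hp
          · have hbj := hb.1 j hmemj
            constructor
            · rw [hold _ (by omega)]; exact ih1 j hmemj
            · simpa [hnew] using hx1
          · have hbp := hb.2 p hp
            rw [hold _ (by omega), hold _ (by omega)]
            exact ih2 p hp

lemma bf_rights_nodup (w : List ℕ) : ((bracketFold w).2.map (fun p => p.2)).Nodup := by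
  induction w using List.reverseRecOn with
  | nil => simp [bracketFold]
  | append_singleton w x ih =>
    rw [bracketFold_snoc]
    by_cases hx : x = 2
    · rw [if_pos hx]; exact ih
    · rw [if_neg hx]
      generalize hS : (bracketFold w).1 = S
      rcases S with _ | ⟨j, rest⟩
      · exact ih
      · simp only [List.map_cons, List.nodup_cons]
        refine ⟨fun hmem => ?_, ih⟩
        rcases List.mem_map.mp hmem with ⟨p, hp, hp2⟩
        have := (bf_bounds w).2 p hp
        omega

lemma count_one_two (w : List ℕ) (hw : ∀ a ∈ w, a = 1 ∨ a = 2) :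
    w.count 1 + w.count 2 = w.length := by
  induction w with
  | nil => simp
  | cons a w ih =>
    have hw' : ∀ b ∈ w, b = 1 ∨ b = 2 := fun b hb => hw b (by simp [hb])
    have hih := ih hw'
    rcases hw a (by simp) with rfl | rfl <;> simp [List.count_cons] <;> omega





lemma Ptab_snoc (w : List ℕ) (x : ℕ) : Ptab (w ++ [x]) = tabInsert (Ptab w) x := by
  unfold Ptab; rw [List.foldl_append]; rfl

def ptabOf (a b r : ℕ) : List (List ℕ) :=
  if a + b = 0 then []
  else if r = 0 then [List.replicate a 1 ++ List.replicate b 2]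
  else [List.replicate a 1 ++ List.replicate b 2, List.replicate r 2]

lemma rowInsert_two (a b : ℕ) :
    rowInsert (List.replicate a 1 ++ List.replicate b 2) 2 =
      (List.replicate a 1 ++ List.replicate (b+1) 2, none) := by
  unfold rowInsert
  have h : (List.replicate a 1 ++ List.replicate b 2).findIdx?
      (fun c => decide ((2:ℕ) < c)) = none := by
    rw [List.findIdx?_eq_none_iff]
    intro c hc
    rcases List.mem_append.mp hc with h | h <;>
      simp [List.eq_of_mem_replicate h]
  rw [h]
  simp [List.append_assoc, List.replicate_succ' (n := b)]

lemma replicate_findIdx_one (a : ℕ) :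
    (List.replicate a 1).findIdx? (fun c => decide ((1:ℕ) < c)) = none := by
  rw [List.findIdx?_eq_none_iff]
  intro c hc
  simp [List.eq_of_mem_replicate hc]

lemma rowInsert_one_b0 (a : ℕ) :
    rowInsert (List.replicate a 1) 1 = (List.replicate (a+1) 1, none) := by
  unfold rowInsert
  rw [replicate_findIdx_one]
  simp [List.replicate_succ' (n := a)]

lemma set_rep (a : ℕ) (L : List ℕ) (x : ℕ) :
    (List.replicate a 1 ++ L).set a x = List.replicate a 1 ++ L.set 0 x := by
  induction a with
  | zero => simp
  | succ a ih => simp [List.replicate_succ, List.set, ih]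

lemma get?_rep (a : ℕ) (L : List ℕ) :
    (List.replicate a 1 ++ L)[a]? = L[0]? := by
  induction a with
  | zero => simp
  | succ a ih => simpa [List.replicate_succ] using ih

lemma rowInsert_one_pos (a b : ℕ) (hb : 0 < b) :
    rowInsert (List.replicate a 1 ++ List.replicate b 2) 1 =
      (List.replicate (a+1) 1 ++ List.replicate (b-1) 2, some 2) := by
  obtain ⟨b', rfl⟩ : ∃ b', b = b' + 1 := ⟨b - 1, by omega⟩
  unfold rowInsert
  have h : (List.replicate a 1 ++ List.replicate (b'+1) 2).findIdx?
      (fun c => decide ((1:ℕ) < c)) = some a := by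
    rw [List.findIdx?_append, replicate_findIdx_one]
    simp [List.replicate_succ, List.findIdx?_cons]
  rw [h]
  show ((List.replicate a 1 ++ List.replicate (b'+1) 2).set a 1,
    (List.replicate a 1 ++ List.replicate (b'+1) 2)[a]?) = _
  rw [List.replicate_succ, set_rep, get?_rep]
  simp [List.replicate_succ' (n := a), List.append_assoc]

lemma tabInsert_two (a b r : ℕ) (hr : r ≤ a) :
    tabInsert (ptabOf a b r) 2 = ptabOf a (b+1) r := by
  rcases Nat.eq_zero_or_pos (a + b) with hab | hab
  · have : a = 0 := by omega
    have : b = 0 := by omega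
    have : r = 0 := by omega
    subst_vars
    simp [ptabOf, tabInsert]
  · rcases Nat.eq_zero_or_pos r with hr0 | hrpos
    · subst hr0
      rw [ptabOf, ptabOf, if_neg (by omega), if_pos rfl, if_neg (by omega), if_pos rfl]
      simp [tabInsert, rowInsert_two]
    · rw [ptabOf, ptabOf, if_neg (by omega), if_neg (by omega),
        if_neg (by omega), if_neg (by omega)]
      simp [tabInsert, rowInsert_two]

lemma tabInsert_one_b0 (a r : ℕ) (hr : r ≤ a) :
    tabInsert (ptabOf a 0 r) 1 = ptabOf (a+1) 0 r := by
  rcases Nat.eq_zero_or_pos a with ha0 | hapos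
  · have : r = 0 := by omega
    subst_vars
    simp [ptabOf, tabInsert, rowInsert_one_b0]
  · rcases Nat.eq_zero_or_pos r with hr0 | hrpos
    · subst hr0
      rw [ptabOf, ptabOf, if_neg (by omega), if_pos rfl, if_neg (by omega), if_pos rfl]
      simp only [List.replicate_zero, List.append_nil, tabInsert, rowInsert_one_b0]
    · rw [ptabOf, ptabOf, if_neg (by omega), if_neg (by omega),
        if_neg (by omega), if_neg (by omega)]
      simp only [List.replicate_zero, List.append_nil, tabInsert, rowInsert_one_b0]

lemma tabInsert_one_pos (a b r : ℕ) (hb : 0 < b) :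
    tabInsert (ptabOf a b r) 1 = ptabOf (a+1) (b-1) (r+1) := by
  rcases Nat.eq_zero_or_pos r with hr0 | hrpos
  · subst hr0
    rw [ptabOf, ptabOf, if_neg (by omega), if_pos rfl, if_neg (by omega),
      if_neg (by omega)]
    simp [tabInsert, rowInsert_one_pos a b hb]
  · rw [ptabOf, ptabOf, if_neg (by omega), if_neg (by omega),
      if_neg (by omega), if_neg (by omega)]
    simp only [tabInsert, rowInsert_one_pos a b hb]
    have h2 := rowInsert_two 0 r
    simp only [List.replicate_zero, List.nil_append] at h2
    simp [tabInsert, h2, List.replicate_succ' (n := r)]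

lemma ptab_struct (w : List ℕ) (hw : ∀ a ∈ w, a = 1 ∨ a = 2) :
    Ptab w = ptabOf (w.count 1) (bracketFold w).1.length (bracketFold w).2.length ∧
    (bracketFold w).1.length + (bracketFold w).2.length = w.count 2 ∧
    (bracketFold w).2.length ≤ w.count 1 := by
  induction w using List.reverseRecOn with
  | nil => simp [Ptab, ptabOf, bracketFold]
  | append_singleton w x ih =>
    have hw' : ∀ a ∈ w, a = 1 ∨ a = 2 := fun a ha => hw a (by simp [ha])
    obtain ⟨ihP, ihc, ihr⟩ := ih hw'
    rcases hw x (by simp) with rfl | rfl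
    · -- x = 1
      have hc1 : (w ++ [1]).count 1 = w.count 1 + 1 := by simp
      have hc2 : (w ++ [1]).count 2 = w.count 2 := by simp
      generalize hS : (bracketFold w).1 = S at *
      rcases S with _ | ⟨j, rest⟩
      · have e : bracketFold (w ++ [1]) = bracketFold w := by
          rw [bracketFold_snoc, if_neg (by norm_num), hS]
        rw [e, hS, hc1, hc2, Ptab_snoc, ihP]
        refine ⟨?_, by simpa using ihc, by omega⟩
        have := tabInsert_one_b0 (w.count 1) (bracketFold w).2.length ihr
        simpa [hS] using this
      · have e : bracketFold (w ++ [1]) = (rest, (j, w.length + 1) :: (bracketFold w).2) := by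
          rw [bracketFold_snoc, if_neg (by norm_num), hS]
        rw [e, hc1, hc2, Ptab_snoc, ihP]
        simp only [List.length_cons]
        have hb : 0 < (j :: rest).length := by simp
        refine ⟨?_, by simp at ihc ⊢; omega, by omega⟩
        have := tabInsert_one_pos (w.count 1) (j :: rest).length (bracketFold w).2.length hb
        simpa [hS] using this
    · -- x = 2
      have hc1 : (w ++ [2]).count 1 = w.count 1 := by simp
      have hc2 : (w ++ [2]).count 2 = w.count 2 + 1 := by simp
      have e : bracketFold (w ++ [2]) =
          ((w.length + 1) :: (bracketFold w).1, (bracketFold w).2) := by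
        rw [bracketFold_snoc, if_pos rfl]
      rw [e, hc1, hc2, Ptab_snoc, ihP]
      simp only [List.length_cons]
      refine ⟨?_, by omega, by omega⟩
      exact tabInsert_two (w.count 1) (bracketFold w).1.length (bracketFold w).2.length ihr

def shp (m r : ℕ) : List ℕ := if m = 0 then [] else if r = 0 then [m] else [m - r, r]

lemma shape_eq (w : List ℕ) (hw : ∀ a ∈ w, a = 1 ∨ a = 2) :
    shape w = shp w.length (bracketFold w).2.length := by
  obtain ⟨hP, hc, hr⟩ := ptab_struct w hw
  have hlen := count_one_two w hw
  rcases Nat.eq_zero_or_pos w.length with h0 | hpos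
  · have : w = [] := List.eq_nil_of_length_eq_zero h0
    subst this
    simp [shape, Ptab, bracketFold, shp]
  · have hab : ¬ (w.count 1 + (bracketFold w).1.length = 0) := by omega
    have hl0 : ¬ (w.length = 0) := by omega
    rw [shape, hP, ptabOf, if_neg hab, shp, if_neg hl0]
    rcases Nat.eq_zero_or_pos (bracketFold w).2.length with hr0 | hrpos
    · rw [if_pos hr0]
      split <;> simp_all <;> omega
    · rw [if_neg (by omega : ¬ (bracketFold w).2.length = 0)]
      split <;> simp_all <;> omega

lemma rk_filter (w : List ℕ) (i : ℕ) :
    rk w i = ((bracketFold w).2.filter (fun p => decide (p.2 ≤ i))).length := by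
  induction w using List.reverseRecOn generalizing i with
  | nil => simp [rk, Pr, bracketFold]
  | append_singleton w x ih =>
    rcases le_or_gt i w.length with hi | hi
    · have htake : (w ++ [x]).take i = w.take i := List.take_append_of_le_length hi
      have hL : rk (w ++ [x]) i = rk w i := by
        unfold rk Pr; rw [htake]
      rw [hL, ih i, bracketFold_snoc]
      by_cases hx : x = 2
      · rw [if_pos hx]
      · rw [if_neg hx]
        generalize hS : (bracketFold w).1 = S
        rcases S with _ | ⟨j, rest⟩
        · rfl
        · simp only
          rw [List.filter_cons_of_neg (by simp; omega)]
    · have htake : (w ++ [x]).take i = w ++ [x] := by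
        apply List.take_of_length_le; simp; omega
      have hL : rk (w ++ [x]) i = (bracketFold (w ++ [x])).2.length := by
        unfold rk Pr; rw [htake]
      rw [hL]
      have hall : ∀ p ∈ (bracketFold (w ++ [x])).2, (fun p => decide (p.2 ≤ i)) p = true := by
        intro p hp
        have := (bf_bounds (w ++ [x])).2 p hp
        simp at this ⊢
        omega
      rw [List.filter_eq_self.mpr hall]

def Dc (w : List ℕ) (t s : ℕ) : ℕ :=
  ((Finset.Ico t s).filter (fun j => rk w (j+1) = rk w j + 1)).card

def Ex (w : List ℕ) (t s : ℕ) : ℕ := 2 * Dc w t s - (s - t)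

def Ee (w : List ℕ) (t : ℕ) : ℕ := Finset.sup (Finset.Icc t w.length) (Ex w t)

lemma Dc_split (w : List ℕ) {t m s : ℕ} (h1 : t ≤ m) (h2 : m ≤ s) :
    Dc w t s = Dc w t m + Dc w m s := by
  unfold Dc
  rw [← Finset.Ico_union_Ico_eq_Ico h1 h2, Finset.filter_union,
    Finset.card_union_of_disjoint]
  exact Finset.disjoint_filter_filter (Finset.Ico_disjoint_Ico_consecutive t m s)

lemma Dc_single (w : List ℕ) (t : ℕ) :
    Dc w t (t+1) = if rk w (t+1) = rk w t + 1 then 1 else 0 := by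
  unfold Dc
  rw [Nat.Ico_succ_singleton, Finset.filter_singleton]
  split <;> simp

lemma Ee_one_le (w : List ℕ) (t : ℕ) (ht : t < w.length)
    (hpop : rk w (t+1) = rk w t + 1) : 1 ≤ Ee w t := by
  have h1 : Ex w t (t+1) = 1 := by
    unfold Ex
    rw [Dc_single, if_pos hpop]
    omega
  calc 1 = Ex w t (t+1) := h1.symm
    _ ≤ Ee w t := Finset.le_sup (by simp [Finset.mem_Icc]; omega)

lemma Ee_pop (w : List ℕ) (t : ℕ) (ht : t < w.length)
    (hpop : rk w (t+1) = rk w t + 1) : Ee w (t+1) + 1 ≤ Ee w t := by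
  rcases Nat.eq_zero_or_pos (Ee w (t+1)) with h0 | hpos
  · rw [h0]; exact Ee_one_le w t ht hpop
  · obtain ⟨s, hs, hse⟩ := Finset.exists_mem_eq_sup (Finset.Icc (t+1) w.length)
      ⟨t+1, by simp [Finset.mem_Icc]; omega⟩ (Ex w (t+1))
    rw [Finset.mem_Icc] at hs
    have hD : Dc w t s = Dc w (t+1) s + 1 := by
      rw [Dc_split w (by omega : t ≤ t+1) (by omega : t+1 ≤ s), Dc_single, if_pos hpop]
      omega
    have hEx : Ex w (t+1) s = Ee w (t+1) := hse.symm
    have hle : Ex w t s ≤ Ee w t := Finset.le_sup (by simp [Finset.mem_Icc]; omega)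
    unfold Ex at hEx hle
    rw [hD] at hle
    omega

lemma Ee_nonpop (w : List ℕ) (t : ℕ) (hpop : rk w (t+1) = rk w t) :
    Ee w (t+1) ≤ Ee w t + 1 := by
  apply Finset.sup_le
  intro s hs
  rw [Finset.mem_Icc] at hs
  have hD : Dc w t s = Dc w (t+1) s := by
    rw [Dc_split w (by omega : t ≤ t+1) (by omega : t+1 ≤ s), Dc_single,
      if_neg (by omega)]
    omega
  have hle : Ex w t s ≤ Ee w t := Finset.le_sup (by simp [Finset.mem_Icc]; omega)
  unfold Ex at hle ⊢
  rw [hD] at hle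
  omega

lemma height_bound (w : List ℕ) (hw : ∀ a ∈ w, a = 1 ∨ a = 2) (t : ℕ) :
    ∀ s, t ≤ s → s ≤ w.length →
      (St w s).length + 2 * Dc w t s ≤ (St w t).length + (s - t) := by
  intro s hts hsn
  induction s, hts using Nat.le_induction with
  | base =>
    unfold Dc
    simp
  | succ s hts ih =>
    have hsn' : s ≤ w.length := by omega
    have hslt : s < w.length := by omega
    have ihs := ih hsn'
    have hD : Dc w t (s+1) = Dc w t s + Dc w s (s+1) :=
      Dc_split w hts (by omega)
    have hx := hw _ (getD_mem w s hslt)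
    rcases step_cases w s hslt hx with ⟨_, hSt, hPr⟩ | ⟨_, j, rest, hSt0, hSt, hPr⟩ |
        ⟨_, hemp, hSt, hPr⟩
    · have hrk : rk w (s+1) = rk w s := by unfold rk; rw [hPr]
      have h1 : Dc w s (s+1) = 0 := by rw [Dc_single, if_neg (by omega)]
      have h2 : (St w (s+1)).length = (St w s).length + 1 := by rw [hSt]; simp
      omega
    · have hrk : rk w (s+1) = rk w s + 1 := by unfold rk; rw [hPr]; simp
      have h1 : Dc w s (s+1) = 1 := by rw [Dc_single, if_pos hrk]
      have h2 : (St w s).length = rest.length + 1 := by rw [hSt0]; simp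
      have h3 : (St w (s+1)).length = rest.length := by rw [hSt]
      omega
    · have hrk : rk w (s+1) = rk w s := by unfold rk; rw [hPr]
      have h1 : Dc w s (s+1) = 0 := by rw [Dc_single, if_neg (by omega)]
      have h2 : (St w (s+1)).length = (St w s).length := by rw [hSt, hemp]
      omega

lemma Ee_le_height (w : List ℕ) (hw : ∀ a ∈ w, a = 1 ∨ a = 2) (t : ℕ)
    (ht : t ≤ w.length) : Ee w t ≤ (St w t).length := by
  apply Finset.sup_le
  intro s hs
  rw [Finset.mem_Icc] at hs
  have := height_bound w hw t s hs.1 hs.2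
  unfold Ex
  omega

lemma crux (u v : List ℕ) (hu : ∀ a ∈ u, a = 1 ∨ a = 2) (hv : ∀ a ∈ v, a = 1 ∨ a = 2)
    (hlen : u.length = v.length) (H : ∀ i, rk u i = rk v i) :
    ∀ t, t ≤ u.length →
      Pr u t = Pr v t ∧ (St u t).take (Ee u t) = (St v t).take (Ee u t) := by
  have hfun : rk u = rk v := funext H
  have hEuv : ∀ t, Ee u t = Ee v t := by
    intro t
    unfold Ee Ex Dc
    rw [hfun, hlen]
  intro t
  induction t with
  | zero =>
    intro _
    constructor
    · simp [Pr, bracketFold]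
    · simp [St, bracketFold]
  | succ t ih =>
    intro ht1
    obtain ⟨hPr, hSt⟩ := ih (by omega)
    have htu : t < u.length := by omega
    have htv : t < v.length := by omega
    have hxu := hu _ (getD_mem u t htu)
    have hxv := hv _ (getD_mem v t htv)
    rcases step_cases u t htu hxu with ⟨_, hStu, hPru⟩ | ⟨_, j, rest, hStu0, hStu, hPru⟩ |
        ⟨_, _, hStu, hPru⟩
    · -- u pushes: non-pop
      have hrku : rk u (t+1) = rk u t := by unfold rk; rw [hPru]
      have hrkv : rk v (t+1) = rk v t := by rw [← H, ← H, hrku]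
      have hPrv : Pr v (t+1) = Pr v t := by
        rcases step_cases v t htv hxv with ⟨_, _, h⟩ | ⟨_, j', rest', _, _, h⟩ | ⟨_, _, _, h⟩
        · exact h
        · exfalso; have : rk v (t+1) = rk v t + 1 := by unfold rk; rw [h]; simp
          omega
        · exact h
      refine ⟨by rw [hPru, hPrv, hPr], ?_⟩
      rcases Nat.eq_zero_or_pos (Ee u (t+1)) with h0 | hposE
      · simp [h0]
      · -- both must push
        have hStv : St v (t+1) = (t+1) :: St v t := by
          rcases step_cases v t htv hxv with ⟨_, h, _⟩ | ⟨_, j', rest', _, h, hp⟩ |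
              ⟨_, _, h, _⟩
          · exact h
          · exfalso; have : rk v (t+1) = rk v t + 1 := by unfold rk; rw [hp]; simp
            omega
          · exfalso
            have hb := Ee_le_height v hv (t+1) (by omega)
            rw [h] at hb
            simp at hb
            rw [← hEuv] at hb
            omega
        obtain ⟨e, he⟩ : ∃ e, Ee u (t+1) = e + 1 := ⟨Ee u (t+1) - 1, by omega⟩
        have hE3 : Ee u (t+1) ≤ Ee u t + 1 := Ee_nonpop u t hrku
        rw [hStu, hStv, he, List.take_succ_cons, List.take_succ_cons]
        have : (St u t).take e = (St v t).take e := by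
          have h1 : (St u t).take e = ((St u t).take (Ee u t)).take e := by
            rw [List.take_take]
            congr 1
            omega
          have h2 : (St v t).take e = ((St v t).take (Ee u t)).take e := by
            rw [List.take_take]
            congr 1
            omega
          rw [h1, h2, hSt]
        rw [this]
    · -- u pops
      have hrku : rk u (t+1) = rk u t + 1 := by unfold rk; rw [hPru]; simp
      have hrkv : rk v (t+1) = rk v t + 1 := by rw [← H, ← H]; exact hrku
      obtain ⟨j', rest', hStv0, hStv, hPrv⟩ :
          ∃ j' rest', St v t = j' :: rest' ∧ St v (t+1) = rest' ∧
            Pr v (t+1) = (j', t+1) :: Pr v t := by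
        rcases step_cases v t htv hxv with ⟨_, _, h⟩ | ⟨_, j', rest', h1, h2, h3⟩ |
            ⟨_, _, _, h⟩
        · exfalso; have : rk v (t+1) = rk v t := by unfold rk; rw [h]
          omega
        · exact ⟨j', rest', h1, h2, h3⟩
        · exfalso; have : rk v (t+1) = rk v t := by unfold rk; rw [h]
          omega
      have hE1 : 1 ≤ Ee u t := Ee_one_le u t htu hrku
      obtain ⟨e, he⟩ : ∃ e, Ee u t = e + 1 := ⟨Ee u t - 1, by omega⟩
      rw [hStu0, hStv0, he, List.take_succ_cons, List.take_succ_cons] at hSt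
      have hjj : j = j' := by exact (List.cons.injEq _ _ _ _ ▸ hSt).1
      have htails : rest.take e = rest'.take e := by
        have := hSt
        rw [hjj] at this
        exact (List.cons_eq_cons.mp this).2
      refine ⟨by rw [hPru, hPrv, hPr, hjj], ?_⟩
      have hE2 : Ee u (t+1) + 1 ≤ Ee u t := Ee_pop u t htu hrku
      rw [hStu, hStv]
      have h1 : rest.take (Ee u (t+1)) = (rest.take e).take (Ee u (t+1)) := by
        rw [List.take_take]
        congr 1
        omega
      have h2 : rest'.take (Ee u (t+1)) = (rest'.take e).take (Ee u (t+1)) := by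
        rw [List.take_take]
        congr 1
        omega
      rw [h1, h2, htails]
    · -- u free one: non-pop, u stack empty
      have hrku : rk u (t+1) = rk u t := by unfold rk; rw [hPru]
      have hrkv : rk v (t+1) = rk v t := by rw [← H, ← H, hrku]
      have hPrv : Pr v (t+1) = Pr v t := by
        rcases step_cases v t htv hxv with ⟨_, _, h⟩ | ⟨_, j', rest', _, _, h⟩ | ⟨_, _, _, h⟩
        · exact h
        · exfalso; have : rk v (t+1) = rk v t + 1 := by unfold rk; rw [h]; simp
          omega
        · exact h
      refine ⟨by rw [hPru, hPrv, hPr], ?_⟩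
      have hb := Ee_le_height u hu (t+1) (by omega)
      rw [hStu] at hb
      simp at hb
      simp [hb]


def popsUpto (w : List ℕ) (i : ℕ) : List ℕ :=
  (List.range i).filter (fun t => decide (rk w (t+1) = rk w t + 1))

def Rrow (w : List ℕ) (i : ℕ) : List ℕ := (popsUpto w i).map (· + 1)

def Lrow (w : List ℕ) (i : ℕ) : List ℕ :=
  ((List.range i).filter (fun t => decide (¬ (rk w (t+1) = rk w t + 1)))).map (· + 1)

lemma rk_popsUpto (w : List ℕ) (hw : ∀ a ∈ w, a = 1 ∨ a = 2) :
    ∀ i, i ≤ w.length → rk w i = (popsUpto w i).length := by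
  intro i
  induction i with
  | zero => intro _; simp [rk_zero, popsUpto]
  | succ i ih =>
    intro hi
    have hlt : i < w.length := by omega
    have hx := hw _ (getD_mem w i hlt)
    have hp : popsUpto w (i+1) =
        popsUpto w i ++ (List.filter (fun t => decide (rk w (t+1) = rk w t + 1)) ([i])) := by
      unfold popsUpto
      rw [List.range_succ, List.filter_append]
    rcases rk_succ_cases w i hlt hx with h | h
    · rw [hp, List.filter_cons_of_neg (by simp; omega), h, ih (by omega)]
      simp
    · rw [hp, List.filter_cons_of_pos (by simp [h]), h, ih (by omega)]
      simp

lemma Rrow_len (w : List ℕ) (hw : ∀ a ∈ w, a = 1 ∨ a = 2) (i : ℕ) (hi : i ≤ w.length) :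
    (Rrow w i).length = rk w i := by
  rw [Rrow, List.length_map, rk_popsUpto w hw i hi]

lemma Rrow_nil (w : List ℕ) (hw : ∀ a ∈ w, a = 1 ∨ a = 2) (i : ℕ) (hi : i ≤ w.length)
    (h0 : rk w i = 0) : Rrow w i = [] := by
  have := Rrow_len w hw i hi
  rw [h0] at this
  exact List.length_eq_zero_iff.mp this

lemma two_rk_le (w : List ℕ) (hw : ∀ a ∈ w, a = 1 ∨ a = 2) (i : ℕ) (hi : i ≤ w.length) :
    2 * rk w i ≤ i := by
  have hw' : ∀ a ∈ w.take i, a = 1 ∨ a = 2 := fun a ha => hw a (List.take_subset i w ha)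
  obtain ⟨_, hc, hr⟩ := ptab_struct (w.take i) hw'
  have hlen := count_one_two (w.take i) hw'
  have hl : (w.take i).length = i := by rw [List.length_take]; omega
  have : rk w i = (bracketFold (w.take i)).2.length := rfl
  omega

lemma shape_take (w : List ℕ) (hw : ∀ a ∈ w, a = 1 ∨ a = 2) (i : ℕ) (hi : i ≤ w.length) :
    shape (w.take i) = shp i (rk w i) := by
  have hw' : ∀ a ∈ w.take i, a = 1 ∨ a = 2 := fun a ha => hw a (List.take_subset i w ha)
  have h := shape_eq (w.take i) hw'
  rw [h, List.length_take]
  congr 1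
  omega

lemma Lrow_succ_nonpop (w : List ℕ) (i : ℕ) (h : rk w (i+1) = rk w i) :
    Lrow w (i+1) = Lrow w i ++ [i+1] := by
  unfold Lrow
  rw [List.range_succ, List.filter_append, List.filter_cons_of_pos (by simp; omega)]
  simp

lemma Rrow_succ_nonpop (w : List ℕ) (i : ℕ) (h : rk w (i+1) = rk w i) :
    Rrow w (i+1) = Rrow w i := by
  unfold Rrow popsUpto
  rw [List.range_succ, List.filter_append, List.filter_cons_of_neg (by simp; omega)]
  simp

lemma Lrow_succ_pop (w : List ℕ) (i : ℕ) (h : rk w (i+1) = rk w i + 1) :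
    Lrow w (i+1) = Lrow w i := by
  unfold Lrow
  rw [List.range_succ, List.filter_append, List.filter_cons_of_neg (by simp; omega)]
  simp

lemma Rrow_succ_pop (w : List ℕ) (i : ℕ) (h : rk w (i+1) = rk w i + 1) :
    Rrow w (i+1) = Rrow w i ++ [i+1] := by
  unfold Rrow popsUpto
  rw [List.range_succ, List.filter_append, List.filter_cons_of_pos (by simp [h])]
  simp

lemma qtab_inv (w : List ℕ) (hw : ∀ a ∈ w, a = 1 ∨ a = 2) :
    ∀ i, i ≤ w.length →
      (List.range i).foldl (fun q i =>
        let s1 := shape (w.take i)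
        let s2 := shape (w.take (i + 1))
        let j := (List.range s2.length).findIdx
          (fun r => decide (s2.getD r 0 ≠ s1.getD r 0))
        if j < q.length then q.set j (q.getD j ([] : List ℕ) ++ [i + 1]) else q ++ [[i + 1]])
        ([] : List (List ℕ)) =
      (if i = 0 then [] else if rk w i = 0 then [Lrow w i] else [Lrow w i, Rrow w i]) := by
  intro i
  induction i with
  | zero => intro _; simp
  | succ i ih =>
    intro hi
    rw [List.range_succ, List.foldl_append, ih (by omega), List.foldl_cons, List.foldl_nil]
    have hlt : i < w.length := by omega
    have hx := hw _ (getD_mem w i hlt)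
    have hs1 : shape (w.take i) = shp i (rk w i) := shape_take w hw i (by omega)
    have hs2 : shape (w.take (i+1)) = shp (i+1) (rk w (i+1)) := shape_take w hw (i+1) hi
    have h2r : 2 * rk w i ≤ i := two_rk_le w hw i (by omega)
    have h2r' : 2 * rk w (i+1) ≤ i + 1 := two_rk_le w hw (i+1) hi
    rcases rk_succ_cases w i hlt hx with hstep | hstep
    · -- non-pop step
      rcases Nat.eq_zero_or_pos i with rfl | hipos
      · -- i = 0
        have h0 : rk w 0 = 0 := rk_zero w
        have h1 : rk w (0+1) = 0 := by omega
        rw [Lrow_succ_nonpop w 0 hstep]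
        simp only [hs1, hs2, h0, h1, shp, if_pos rfl, if_neg (by omega : ¬ (0+1 = 0))]
        simp [Lrow, List.findIdx_cons, List.range_succ]
      · have hLs := Lrow_succ_nonpop w i hstep
        have hRs := Rrow_succ_nonpop w i hstep
        rcases Nat.eq_zero_or_pos (rk w i) with hr0 | hrpos
        · -- rank zero
          have hr1 : rk w (i+1) = 0 := by omega
          rw [hLs, hRs]
          simp only [hs1, hs2, hr0, hr1, shp, if_neg (by omega : ¬ i = 0),
            if_neg (by omega : ¬ i + 1 = 0), if_pos rfl]
          have hne : ((i:ℕ) + 1 ≠ i) := by omega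
          simp [List.findIdx_cons, hne, List.range_succ, if_neg (by omega : ¬ i = 0)]
        · -- rank positive
          have hr1 : rk w (i+1) ≠ 0 := by omega
          have hrle : rk w i ≤ i := by omega
          rw [hLs, hRs]
          simp only [hs1, hs2, hstep, shp, if_neg (by omega : ¬ i = 0),
            if_neg (by omega : ¬ i + 1 = 0), if_neg (by omega : ¬ rk w i = 0)]
          have hne : ((i:ℕ) + 1 - rk w i ≠ i - rk w i) := by omega
          simp [List.findIdx_cons, hne, List.range_succ, if_neg (by omega : ¬ rk w i = 0),
            if_neg (by omega : ¬ i = 0)]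
    · -- pop step
      have hipos : 1 ≤ i := by omega
      have hLs := Lrow_succ_pop w i hstep
      have hRs := Rrow_succ_pop w i hstep
      rcases Nat.eq_zero_or_pos (rk w i) with hr0 | hrpos
      · -- rank was zero
        have hRnil : Rrow w i = [] := Rrow_nil w hw i (by omega) hr0
        rw [hLs, hRs, hRnil]
        simp only [hs1, hs2, hstep, hr0, shp, if_neg (by omega : ¬ i = 0),
          if_neg (by omega : ¬ i + 1 = 0), if_pos rfl, if_neg (by omega : ¬ (0:ℕ) + 1 = 0)]
        have he1 : (i:ℕ) + 1 - (0 + 1) = i := by omega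
        simp [List.findIdx_cons, he1, List.range_succ]
      · -- rank positive
        rw [hLs, hRs]
        simp only [hs1, hs2, hstep, shp, if_neg (by omega : ¬ i = 0),
          if_neg (by omega : ¬ i + 1 = 0), if_neg (by omega : ¬ rk w i = 0),
          if_neg (by omega : ¬ rk w i + 1 = 0)]
        have he1 : (i:ℕ) + 1 - (rk w i + 1) = i - rk w i := by omega
        have hne : rk w i + 1 ≠ rk w i := by omega
        simp [List.findIdx_cons, he1, hne, List.range_succ]

lemma Qtab_struct (w : List ℕ) (hw : ∀ a ∈ w, a = 1 ∨ a = 2) :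
    Qtab w = (if w.length = 0 then [] else if rk w w.length = 0 then [Lrow w w.length]
      else [Lrow w w.length, Rrow w w.length]) :=
  qtab_inv w hw w.length le_rfl



lemma rk_eq_of_Qtab (u v : List ℕ) (hu : ∀ a ∈ u, a = 1 ∨ a = 2)
    (hv : ∀ a ∈ v, a = 1 ∨ a = 2) (hlen : u.length = v.length)
    (hQ : Qtab u = Qtab v) : ∀ i, rk u i = rk v i := by
  rw [Qtab_struct u hu, Qtab_struct v hv, ← hlen] at hQ
  rcases Nat.eq_zero_or_pos u.length with h0 | hpos
  · have hu0 : u = [] := List.eq_nil_of_length_eq_zero h0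
    have hv0 : v = [] := List.eq_nil_of_length_eq_zero (by omega)
    subst hu0 hv0
    intro i
    rfl
  · have hR : Rrow u u.length = Rrow v u.length := by
      rw [if_neg (show ¬ (u.length = 0) by omega),
        if_neg (show ¬ (u.length = 0) by omega)] at hQ
      rcases Nat.eq_zero_or_pos (rk u u.length) with h1 | h1 <;>
        rcases Nat.eq_zero_or_pos (rk v u.length) with h2 | h2
      · rw [Rrow_nil u hu u.length le_rfl h1, Rrow_nil v hv u.length (by omega) h2]
      · rw [if_pos h1, if_neg (by omega : ¬ (rk v u.length = 0))] at hQ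
        exact absurd (congrArg List.length hQ) (by simp)
      · rw [if_neg (by omega : ¬ (rk u u.length = 0)), if_pos h2] at hQ
        exact absurd (congrArg List.length hQ) (by simp)
      · rw [if_neg (by omega : ¬ (rk u u.length = 0)),
          if_neg (by omega : ¬ (rk v u.length = 0))] at hQ
        exact (List.cons_eq_cons.mp ((List.cons_eq_cons.mp hQ).2)).1
    have hmem : ∀ t, t < u.length →
        ((rk u (t+1) = rk u t + 1) ↔ (rk v (t+1) = rk v t + 1)) := by
      intro t ht
      have h1 : t + 1 ∈ Rrow u u.length ↔ t + 1 ∈ Rrow v u.length := by rw [hR]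
      simp only [Rrow, popsUpto, List.mem_map, List.mem_filter, List.mem_range] at h1
      constructor
      · intro h
        obtain ⟨a, ⟨ha1, ha2⟩, ha3⟩ := h1.mp ⟨t, ⟨by simpa using ⟨ht, h⟩, rfl⟩⟩
        have : a = t := by omega
        subst this
        simpa using ha2
      · intro h
        obtain ⟨a, ⟨ha1, ha2⟩, ha3⟩ := h1.mpr ⟨t, ⟨by simpa using ⟨ht, h⟩, rfl⟩⟩
        have : a = t := by omega
        subst this
        simpa using ha2
    intro i
    induction i with
    | zero => rw [rk_zero, rk_zero]
    | succ i ih =>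
      rcases lt_or_ge i u.length with hi | hi
      · have hxu := hu _ (getD_mem u i hi)
        have hxv := hv _ (getD_mem v i (by omega))
        rcases rk_succ_cases u i hi hxu with h1 | h1 <;>
          rcases rk_succ_cases v i (by omega) hxv with h2 | h2
        · omega
        · have := (hmem i hi).mpr h2; omega
        · have := (hmem i hi).mp h1; omega
        · omega
      · rw [rk_succ_ge u i hi, rk_succ_ge v i (by omega)]
        exact ih

lemma Qtab_eq_of_rk (u v : List ℕ) (hu : ∀ a ∈ u, a = 1 ∨ a = 2)
    (hv : ∀ a ∈ v, a = 1 ∨ a = 2) (hlen : u.length = v.length)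
    (H : ∀ i, rk u i = rk v i) : Qtab u = Qtab v := by
  have hfun : rk u = rk v := funext H
  rw [Qtab_struct u hu, Qtab_struct v hv, ← hlen]
  simp only [Lrow, Rrow, popsUpto, hfun]

lemma rk_card (w : List ℕ) (hw : ∀ a ∈ w, a = 1 ∨ a = 2) (i : ℕ) :
    rk w i = ((pairedPositions w).filter
      (fun j => j ≤ i ∧ w.getD (j-1) 0 = 1)).card := by
  rw [rk_filter w i]
  set l := (bracketFold w).2.map (fun p => p.2) with hl
  have hnd : l.Nodup := bf_rights_nodup w
  have hA : ((bracketFold w).2.filter (fun p => decide (p.2 ≤ i))).length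
      = (l.filter (fun j => decide (j ≤ i))).length := by
    rw [← List.countP_eq_length_filter, ← List.countP_eq_length_filter, hl,
      List.countP_map]
    rfl
  have hB : (l.filter (fun j => decide (j ≤ i))).length
      = (l.toFinset.filter (fun j => j ≤ i)).card := by
    rw [← List.toFinset_card_of_nodup (hnd.filter _), List.toFinset_filter]
    congr 1
    apply Finset.filter_congr
    intro j _
    simp
  have hC : l.toFinset.filter (fun j => j ≤ i)
      = (pairedPositions w).filter (fun j => j ≤ i ∧ w.getD (j-1) 0 = 1) := by
    ext j
    simp only [Finset.mem_filter, List.mem_toFinset, pairedPositions, Finset.mem_union]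
    constructor
    · rintro ⟨hj, hji⟩
      obtain ⟨p, hp, rfl⟩ := List.mem_map.mp (hl ▸ hj)
      exact ⟨Or.inr (List.mem_map.mpr ⟨p, hp, rfl⟩), hji,
        ((bf_letters w hw).2 p hp).2⟩
    · rintro ⟨hj, hji, hj1⟩
      refine ⟨?_, hji⟩
      rcases hj with hj | hj
      · exfalso
        obtain ⟨p, hp, rfl⟩ := List.mem_map.mp hj
        have := ((bf_letters w hw).2 p hp).1
        omega
      · rw [hl]
        exact hj
  rw [hA, hB, hC]

lemma rk_eq_of_paired (u v : List ℕ) (hu : ∀ a ∈ u, a = 1 ∨ a = 2)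
    (hv : ∀ a ∈ v, a = 1 ∨ a = 2)
    (hpp : pairedPositions u = pairedPositions v)
    (hlet : ∀ i ∈ pairedPositions u, u.getD (i - 1) 0 = v.getD (i - 1) 0) :
    ∀ i, rk u i = rk v i := by
  intro i
  rw [rk_card u hu i, rk_card v hv i, ← hpp]
  congr 1
  apply Finset.filter_congr
  intro j hj
  rw [hlet j hj]


/-- for two-letter words of the same length, the recording tableaux
coincide iff the sets of paired positions coincide and the letters at the paired
positions agree. -/
theorem Qtab_eq_iff_paired (u v : List ℕ)
    (hu : ∀ a ∈ u, a = 1 ∨ a = 2) (hv : ∀ a ∈ v, a = 1 ∨ a = 2)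
    (hlen : u.length = v.length) :
    Qtab u = Qtab v ↔
      pairedPositions u = pairedPositions v ∧
        ∀ i ∈ pairedPositions u, u.getD (i - 1) 0 = v.getD (i - 1) 0 := by
  constructor
  · intro hQ
    have H := rk_eq_of_Qtab u v hu hv hlen hQ
    have hpairs : (bracketFold u).2 = (bracketFold v).2 := by
      have h := (crux u v hu hv hlen H u.length le_rfl).1
      unfold Pr at h
      rw [List.take_length, hlen, List.take_length] at h
      exact h
    refine ⟨by unfold pairedPositions; rw [hpairs], ?_⟩
    intro i hi
    rcases Finset.mem_union.mp hi with h | h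
    · obtain ⟨p, hp, rfl⟩ := List.mem_map.mp (List.mem_toFinset.mp h)
      have h1 := ((bf_letters u hu).2 p hp).1
      have h2 := ((bf_letters v hv).2 p (hpairs ▸ hp)).1
      rw [h1, h2]
    · obtain ⟨p, hp, rfl⟩ := List.mem_map.mp (List.mem_toFinset.mp h)
      have h1 := ((bf_letters u hu).2 p hp).2
      have h2 := ((bf_letters v hv).2 p (hpairs ▸ hp)).2
      rw [h1, h2]
  · rintro ⟨hpp, hlet⟩
    exact Qtab_eq_of_rk u v hu hv hlen (rk_eq_of_paired u v hu hv hpp hlet)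

end RSKpaper
end

section
/- Let x be a random infinite sequence of independent letters from {1,2} with P(1) = p_1 ≥ p_2 = P(2) > 0, p_1 + p_2 = 1. Then almost surely x has an initial segment containing strictly more 1's than 2's; consequently, almost surely x contains infinitely many free 1's and every 2 in x becomes paired in some sufficiently long initial segment (under the iterated bracketing of factors 21). -/
open MeasureTheory ProbabilityTheory

namespace RSKpaper

section Aux

lemma bracketFold_nil : bracketFold [] = ([], []) := rfl

lemma bracketFold_append (w : List ℕ) (a : ℕ) :
    bracketFold (w ++ [a]) =
      (if a = 2 then ((w.length + 1) :: (bracketFold w).1, (bracketFold w).2)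
       else match (bracketFold w).1 with
         | [] => bracketFold w
         | j :: rest => (rest, (j, w.length + 1) :: (bracketFold w).2)) := by
  unfold bracketFold
  rw [List.zipIdx_append, List.map_append, List.foldl_append, Nat.zero_add]
  rfl

lemma getD_concat_length (w : List ℕ) (a : ℕ) : (w ++ [a]).getD w.length 0 = a := by
  simp [List.getD_eq_getElem?_getD]

lemma getD_concat_lt (w : List ℕ) (a : ℕ) {i : ℕ} (h : i < w.length) :
    (w ++ [a]).getD i 0 = w.getD i 0 := by
  simp [List.getD_eq_getElem?_getD, List.getElem?_append_left h]

lemma drop_concat (w : List ℕ) (a : ℕ) {j : ℕ} (h : j ≤ w.length) :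
    (w ++ [a]).drop j = w.drop j ++ [a] := by
  rw [List.drop_append_of_le_length h]

/-- The master invariant for `bracketFold`. -/
lemma bracket_inv (w : List ℕ) :
    ((bracketFold w).1.length + (bracketFold w).2.length = w.count 2) ∧
    (∀ q ∈ (bracketFold w).1, 1 ≤ q ∧ q ≤ w.length ∧ w.getD (q - 1) 0 = 2) ∧
    (∀ i j, (bracketFold w).1[i]? = some j →
      i + (w.drop j).length = 2 * (w.drop j).count 2) ∧
    (∀ p ∈ (bracketFold w).2, 1 ≤ p.1 ∧ p.1 ≤ w.length ∧ w.getD (p.1 - 1) 0 = 2 ∧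
      1 ≤ p.2 ∧ p.2 ≤ w.length ∧ w.getD (p.2 - 1) 0 ≠ 2) := by
  induction w using List.reverseRecOn with
  | nil => simp [bracketFold_nil]
  | append_singleton w a IH =>
    obtain ⟨IHd, IHa, IHb, IHc⟩ := IH
    have hlen : (w ++ [a]).length = w.length + 1 := by simp
    have hgetD : ∀ q : ℕ, 1 ≤ q → q ≤ w.length → (w ++ [a]).getD (q - 1) 0 = w.getD (q - 1) 0 :=
      fun q h1 h2 => getD_concat_lt w a (by omega)
    have hgetDlast : (w ++ [a]).getD (w.length + 1 - 1) 0 = a := by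
      simp only [Nat.add_sub_cancel]
      exact getD_concat_length w a
    have hIHc' : ∀ p ∈ (bracketFold w).2, 1 ≤ p.1 ∧ p.1 ≤ (w ++ [a]).length ∧
        (w ++ [a]).getD (p.1 - 1) 0 = 2 ∧ 1 ≤ p.2 ∧ p.2 ≤ (w ++ [a]).length ∧
        (w ++ [a]).getD (p.2 - 1) 0 ≠ 2 := by
      intro p hp
      obtain ⟨h1, h2, h3, h4, h5, h6⟩ := IHc p hp
      exact ⟨h1, by omega, by rw [hgetD p.1 h1 h2]; exact h3, h4, by omega,
        by rw [hgetD p.2 h4 h5]; exact h6⟩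
    rw [bracketFold_append]
    by_cases ha : a = 2
    · rw [if_pos ha]
      have hca : (List.count 2 ([a])) = 1 := by subst ha; simp
      refine ⟨?_, ?_, ?_, ?_⟩
      · rw [List.count_append, hca]
        simp only [List.length_cons]
        omega
      · intro q hq
        rcases List.mem_cons.1 hq with h | h
        · subst h
          exact ⟨by omega, by omega, by rw [hgetDlast]; exact ha⟩
        · obtain ⟨h1, h2, h3⟩ := IHa q h
          exact ⟨h1, by omega, by rw [hgetD q h1 h2]; exact h3⟩
      · intro i j hij
        match i, hij with
        | 0, hij =>
          simp only [List.getElem?_cons_zero, Option.some_inj] at hij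
          subst hij
          rw [List.drop_of_length_le (by omega)]
          simp
        | (i + 1), hij =>
          simp only [List.getElem?_cons_succ] at hij
          have hj := IHb i j hij
          have hjle : j ≤ w.length := (IHa j (List.mem_of_getElem? hij)).2.1
          rw [drop_concat w a hjle, List.length_append, List.count_append, hca]
          simp only [List.length_singleton]
          omega
      · exact hIHc'
    · have hca : (List.count 2 ([a])) = 0 := by
        simp [List.count_singleton]
        omega
      rcases hst : (bracketFold w).1 with _ | ⟨j0, rest⟩
      · rw [if_neg ha]
        rw [hst] at IHd ⊢
        refine ⟨?_, ?_, ?_, ?_⟩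
        · rw [List.count_append, hca]
          simpa using IHd
        · intro q hq; simp at hq
        · intro i j hij; simp at hij
        · exact hIHc'
      · rw [if_neg ha]
        rw [hst] at IHd
        have hj0 := IHa j0 (by rw [hst]; exact List.mem_cons_self)
        refine ⟨?_, ?_, ?_, ?_⟩
        · rw [List.count_append, hca]
          simp only [List.length_cons] at IHd ⊢
          omega
        · intro q hq
          have hmem : q ∈ (bracketFold w).1 := by rw [hst]; exact List.mem_cons_of_mem _ hq
          obtain ⟨h1, h2, h3⟩ := IHa q hmem
          exact ⟨h1, by omega, by rw [hgetD q h1 h2]; exact h3⟩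
        · intro i j hij
          have hij' : (bracketFold w).1[i+1]? = some j := by rw [hst]; simpa using hij
          have hj := IHb (i + 1) j hij'
          have hjle : j ≤ w.length := (IHa j (List.mem_of_getElem? hij')).2.1
          rw [drop_concat w a hjle, List.length_append, List.count_append, hca]
          simp only [List.length_singleton]
          omega
        · intro p hp
          rcases List.mem_cons.1 hp with h | h
          · subst h
            exact ⟨hj0.1, by omega, by rw [hgetD j0 hj0.1 hj0.2.1]; exact hj0.2.2,
              by omega, by omega, by rw [hgetDlast]; exact ha⟩
          · exact hIHc' p h

lemma mem_pairedPositions {w : List ℕ} {q : ℕ} :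
    q ∈ pairedPositions w ↔ ∃ p ∈ (bracketFold w).2, p.1 = q ∨ p.2 = q := by
  simp only [pairedPositions, Finset.mem_union, List.mem_toFinset, List.mem_map]
  constructor
  · rintro (⟨p, hp, rfl⟩ | ⟨p, hp, rfl⟩)
    · exact ⟨p, hp, Or.inl rfl⟩
    · exact ⟨p, hp, Or.inr rfl⟩
  · rintro ⟨p, hp, rfl | rfl⟩
    · exact Or.inl ⟨p, hp, rfl⟩
    · exact Or.inr ⟨p, hp, rfl⟩

lemma pairs_mono (w v : List ℕ) {p : ℕ × ℕ} (hp : p ∈ (bracketFold w).2) :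
    p ∈ (bracketFold (w ++ v)).2 := by
  induction v using List.reverseRecOn with
  | nil => simpa using hp
  | append_singleton v a IH =>
    rw [← List.append_assoc, bracketFold_append]
    by_cases ha : a = 2
    · rw [if_pos ha]; exact IH
    · rw [if_neg ha]
      rcases hst : (bracketFold (w ++ v)).1 with _ | ⟨j0, rest⟩
      · exact IH
      · exact List.mem_cons_of_mem _ IH

lemma pairedPositions_mono (w v : List ℕ) {q : ℕ} (hq : q ∈ pairedPositions w) :
    q ∈ pairedPositions (w ++ v) := by
  rw [mem_pairedPositions] at hq ⊢
  obtain ⟨p, hp, h⟩ := hq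
  exact ⟨p, pairs_mono w v hp, h⟩

lemma pairs_append (w v : List ℕ) {p : ℕ × ℕ} (hp : p ∈ (bracketFold (w ++ v)).2) :
    p ∈ (bracketFold w).2 ∨ w.length < p.2 := by
  induction v using List.reverseRecOn with
  | nil => left; simpa using hp
  | append_singleton v a IH =>
    rw [← List.append_assoc, bracketFold_append] at hp
    by_cases ha : a = 2
    · rw [if_pos ha] at hp; exact IH hp
    · rw [if_neg ha] at hp
      rcases hst : (bracketFold (w ++ v)).1 with _ | ⟨j0, rest⟩
      · rw [hst] at hp; exact IH hp
      · rw [hst] at hp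
        rcases List.mem_cons.1 hp with h | h
        · subst h
          right
          simp only [List.length_append]
          omega
        · exact IH h

lemma two_in_stack_or_paired (w : List ℕ) (q : ℕ) (h1 : 1 ≤ q) (h2 : q ≤ w.length)
    (h3 : w.getD (q - 1) 0 = 2) :
    q ∈ (bracketFold w).1 ∨ q ∈ pairedPositions w := by
  induction w using List.reverseRecOn with
  | nil => simp at h2; omega
  | append_singleton w a IH =>
    simp only [List.length_append, List.length_singleton] at h2
    rcases Nat.lt_or_ge q (w.length + 1) with hq | hq
    · -- q ≤ w.length, use IH
      have hqle : q ≤ w.length := by omega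
      have h3' : w.getD (q - 1) 0 = 2 := by
        rw [← getD_concat_lt w a (by omega : q - 1 < w.length)]; exact h3
      rcases IH hqle h3' with h | h
      · rw [bracketFold_append]
        by_cases ha : a = 2
        · rw [if_pos ha]; left; exact List.mem_cons_of_mem _ h
        · rw [if_neg ha]
          rcases hst : (bracketFold w).1 with _ | ⟨j0, rest⟩
          · rw [hst] at h; simp at h
          · rw [hst] at h
            rcases List.mem_cons.1 h with h' | h'
            · subst h'
              right
              rw [mem_pairedPositions]
              refine ⟨(q, w.length + 1), ?_, Or.inl rfl⟩
              have h2' : (bracketFold (w ++ [a])).2 = (q, w.length + 1) :: (bracketFold w).2 := by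
                rw [bracketFold_append, if_neg ha, hst]
              rw [h2']
              exact List.mem_cons_self
            · left; exact h'
      · right; exact pairedPositions_mono w ([a]) h
    · -- q = w.length + 1, the new letter
      have hq' : q = w.length + 1 := by omega
      subst hq'
      have ha : a = 2 := by
        have := getD_concat_length w a
        rw [show w.length + 1 - 1 = w.length from rfl] at h3
        rw [this] at h3; exact h3
      rw [bracketFold_append, if_pos ha]
      left; exact List.mem_cons_self

lemma paired_le_length {w : List ℕ} {q : ℕ} (hq : q ∈ pairedPositions w) :
    1 ≤ q ∧ q ≤ w.length := by
  rw [mem_pairedPositions] at hq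
  obtain ⟨p, hp, h⟩ := hq
  have := (bracket_inv w).2.2.2 p hp
  rcases h with rfl | rfl
  · exact ⟨this.1, this.2.1⟩
  · exact ⟨this.2.2.2.1, this.2.2.2.2.1⟩

lemma one_unpaired_stable (w v : List ℕ) (q : ℕ) (h1 : 1 ≤ q) (h2 : q ≤ w.length)
    (h3 : w.getD (q - 1) 0 ≠ 2) (h4 : q ∉ pairedPositions w) :
    q ∉ pairedPositions (w ++ v) := by
  intro hq
  rw [mem_pairedPositions] at hq
  obtain ⟨p, hp, h⟩ := hq
  rcases pairs_append w v hp with hin | hbig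
  · exact h4 (mem_pairedPositions.2 ⟨p, hin, h⟩)
  · rcases h with rfl | rfl
    · -- p.1 = q : but first components carry letter 2
      have hinv := (bracket_inv (w ++ v)).2.2.2 p hp
      have : (w ++ v).getD (p.1 - 1) 0 = w.getD (p.1 - 1) 0 := by
        rcases v with _ | ⟨b, v'⟩
        · simp
        · exact List.getD_append _ _ _ _ (by omega)
      rw [this] at hinv
      exact h3 hinv.2.2.1
    · omega

lemma stack_count_le (w : List ℕ) {j : ℕ} (hj : j ∈ (bracketFold w).1) :
    (w.drop j).length ≤ 2 * (w.drop j).count 2 := by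
  obtain ⟨i, hi⟩ := List.mem_iff_getElem?.1 hj
  have := (bracket_inv w).2.1 -- unused
  have h := (bracket_inv w).2.2.1 i j hi
  omega

def Yf (n : ℕ) (x : ℕ → ℕ) : ℝ := if x n = 1 then 1 else -1

def Tn (n : ℕ) (x : ℕ → ℕ) : ℝ := ∑ i ∈ Finset.range n, Yf i x

lemma length_pre (n : ℕ) (x : ℕ → ℕ) : (pre n x).length = n := by simp [pre]

lemma pre_succ (n : ℕ) (x : ℕ → ℕ) : pre (n + 1) x = pre n x ++ [x n] := by
  simp [pre, List.range_succ]

lemma take_pre {j n : ℕ} (h : j ≤ n) (x : ℕ → ℕ) : (pre n x).take j = pre j x := by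
  simp [pre, ← List.map_take, List.take_range, Nat.min_eq_left h]

lemma pre_decomp {j n : ℕ} (h : j ≤ n) (x : ℕ → ℕ) :
    pre n x = pre j x ++ (pre n x).drop j := by
  conv_lhs => rw [← List.take_append_drop j (pre n x)]
  rw [take_pre h]

lemma getD_pre {i n : ℕ} (h : i < n) (x : ℕ → ℕ) : (pre n x).getD i 0 = x i := by
  simp [pre, List.getD_eq_getElem?_getD, List.getElem?_map, List.getElem?_range h]

lemma mem_pre {c : ℕ} {n : ℕ} {x : ℕ → ℕ} (h : c ∈ pre n x) : ∃ i, c = x i := by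
  simp only [pre, List.mem_map] at h
  obtain ⟨i, _, rfl⟩ := h
  exact ⟨i, rfl⟩

lemma length_eq_counts {w : List ℕ} (hw : ∀ c ∈ w, c = 1 ∨ c = 2) :
    w.length = w.count 1 + w.count 2 := by
  induction w with
  | nil => simp
  | cons c w IH =>
    have hc := hw c (List.mem_cons_self)
    have := IH (fun d hd => hw d (List.mem_cons_of_mem _ hd))
    rcases hc with rfl | rfl <;>
      simp [List.count_cons, this] <;> omega

lemma Tn_succ (n : ℕ) (x : ℕ → ℕ) : Tn (n + 1) x = Tn n x + Yf n x := by
  simp [Tn, Finset.sum_range_succ]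

lemma Tn_le (n : ℕ) (x : ℕ → ℕ) : Tn n x ≤ n := by
  induction n with
  | zero => simp [Tn]
  | succ n IH =>
    rw [Tn_succ]
    have : Yf n x ≤ 1 := by unfold Yf; split <;> norm_num
    push_cast
    linarith

lemma Tn_eq_counts {x : ℕ → ℕ} (hx : ∀ i, x i = 1 ∨ x i = 2) (n : ℕ) :
    Tn n x = ((pre n x).count 1 : ℝ) - ((pre n x).count 2 : ℝ) := by
  induction n with
  | zero => simp [Tn, pre]
  | succ n IH =>
    rw [Tn_succ, pre_succ, List.count_append, List.count_append, IH]
    rcases hx n with h | h <;> simp [Yf, h] <;> push_cast <;> ring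

lemma pre_letters {x : ℕ → ℕ} (hx : ∀ i, x i = 1 ∨ x i = 2) (n : ℕ) :
    ∀ c ∈ pre n x, c = 1 ∨ c = 2 := by
  intro c hc
  obtain ⟨i, rfl⟩ := mem_pre hc
  exact hx i

lemma count_one_card (x : ℕ → ℕ) (n : ℕ) :
    ((Finset.range n).filter (fun i => x i = 1)).card = (pre n x).count 1 := by
  induction n with
  | zero => simp [pre]
  | succ n IH =>
    rw [pre_succ, List.count_append, Finset.range_add_one, Finset.filter_insert]
    by_cases h : x n = 1
    · rw [if_pos h, Finset.card_insert_of_notMem (by simp)]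
      simp [h, IH]
    · rw [if_neg h]
      simp [h, IH, List.count_singleton]

lemma free_ones_count (x : ℕ → ℕ) (hx : ∀ i, x i = 1 ∨ x i = 2) (n : ℕ) :
    (pre n x).count 1 ≤
      ((Finset.range n).filter
        (fun i => x i = 1 ∧ (i + 1) ∉ pairedPositions (pre n x))).card +
      (pre n x).count 2 := by
  classical
  set w := pre n x with hw
  set A := (Finset.range n).filter (fun i => x i = 1) with hA
  set S := A.filter (fun i => (i + 1) ∉ pairedPositions w) with hS
  set B := A.filter (fun i => ¬ ((i + 1) ∉ pairedPositions w)) with hB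
  have hsplit : A.card ≤ S.card + B.card := by
    have hun : S ∪ B = A := Finset.filter_union_filter_not_eq _ A
    calc A.card = (S ∪ B).card := by rw [hun]
      _ ≤ S.card + B.card := Finset.card_union_le _ _
  have hScard : S = (Finset.range n).filter
      (fun i => x i = 1 ∧ (i + 1) ∉ pairedPositions w) := by
    rw [hS, hA, Finset.filter_filter]
  have hBcard : B.card ≤ (bracketFold w).2.length := by
    have hmap : ∀ i ∈ B, (i + 1) ∈ ((bracketFold w).2.map (fun p => p.2)).toFinset := by
      intro i hi
      simp only [hB, hA, Finset.mem_filter, Finset.mem_range, not_not] at hi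
      obtain ⟨⟨hin, hx1⟩, hpair⟩ := hi
      rw [mem_pairedPositions] at hpair
      obtain ⟨p, hp, hor⟩ := hpair
      rcases hor with h1 | h2
      · exfalso
        have hinv := (bracket_inv w).2.2.2 p hp
        rw [h1] at hinv
        have : w.getD (i + 1 - 1) 0 = 2 := hinv.2.2.1
        rw [show i + 1 - 1 = i from rfl, hw, getD_pre hin] at this
        omega
      · simp only [List.mem_toFinset, List.mem_map]
        exact ⟨p, hp, h2⟩
    calc B.card ≤ ((bracketFold w).2.map (fun p => p.2)).toFinset.card := by
          apply Finset.card_le_card_of_injOn (fun i => i + 1) hmap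
          intro a _ b _ hab
          simpa using hab
      _ ≤ ((bracketFold w).2.map (fun p => p.2)).length := List.toFinset_card_le _
      _ = (bracketFold w).2.length := List.length_map _
  have hpairs_le : (bracketFold w).2.length ≤ w.count 2 := by
    have := (bracket_inv w).1
    omega
  have hAcard : A.card = w.count 1 := by rw [hA, hw]; exact count_one_card x n
  rw [← hScard]
  omega

/-- The main pointwise deduction. -/
lemma pointwise_main (x : ℕ → ℕ) (hx : ∀ i, x i = 1 ∨ x i = 2)
    (hT : ∀ L : ℕ, ∃ n, (L : ℝ) ≤ Tn n x) :
    (∃ n, (pre n x).count 2 < (pre n x).count 1) ∧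
    {j : ℕ | 1 ≤ j ∧ x (j - 1) = 1 ∧
      ∃ M, ∀ N, M ≤ N → j ∉ pairedPositions (pre N x)}.Infinite ∧
    (∀ j, 1 ≤ j → x (j - 1) = 2 →
      ∃ N, j ≤ N ∧ j ∈ pairedPositions (pre N x)) := by
  have hcount : ∀ {m n : ℕ}, (m : ℝ) ≤ Tn n x → (pre n x).count 2 + m ≤ (pre n x).count 1 := by
    intro m n h
    rw [Tn_eq_counts hx n] at h
    have : ((pre n x).count 2 : ℝ) + m ≤ ((pre n x).count 1 : ℝ) := by linarith
    exact_mod_cast this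
  refine ⟨?_, ?_, ?_⟩
  · obtain ⟨n, hn⟩ := hT 1
    have := hcount (m := 1) (by exact_mod_cast hn)
    exact ⟨n, by omega⟩
  · -- infinitely many free 1's
    have key : ∀ t : ℕ, ∃ j, t < j ∧ 1 ≤ j ∧ x (j - 1) = 1 ∧
        ∀ N, j ∉ pairedPositions (pre N x) := by
      intro t
      obtain ⟨n, hn⟩ := hT (t + 1)
      have hc : (pre n x).count 2 + (t + 1) ≤ (pre n x).count 1 := by
        apply hcount; exact_mod_cast hn
      set S := (Finset.range n).filter
        (fun i => x i = 1 ∧ (i + 1) ∉ pairedPositions (pre n x)) with hSdef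
      have hScard : t + 1 ≤ S.card := by
        have hfoc := free_ones_count x hx n
        rw [← hSdef] at hfoc
        omega
      have : ∃ i ∈ S, t ≤ i := by
        by_contra h
        push_neg at h
        have hsub : S ⊆ Finset.range t := by
          intro i hi
          exact Finset.mem_range.2 (h i hi)
        have := Finset.card_le_card hsub
        simp at this
        omega
      obtain ⟨i, hiS, hti⟩ := this
      simp only [hSdef, Finset.mem_filter, Finset.mem_range] at hiS
      obtain ⟨hin, hx1, hnp⟩ := hiS
      refine ⟨i + 1, by omega, by omega, by simpa using hx1, ?_⟩
      intro N
      rcases le_or_gt N n with hNn | hNn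
      · intro hmem
        apply hnp
        have : pre n x = pre N x ++ (pre n x).drop N := pre_decomp hNn x
        rw [this]
        exact pairedPositions_mono _ _ hmem
      · have hdec : pre N x = pre n x ++ (pre N x).drop n := pre_decomp (by omega) x
        rw [hdec]
        apply one_unpaired_stable (pre n x) _ (i + 1) (by omega)
          (by rw [length_pre]; omega) ?_ hnp
        rw [show i + 1 - 1 = i from rfl, getD_pre hin]
        omega
    intro hfin
    obtain ⟨b, hb⟩ := hfin.bddAbove
    obtain ⟨j, hj1, hj2, hj3, hj4⟩ := key b
    have : j ≤ b := hb ⟨hj2, hj3, 0, fun N _ => hj4 N⟩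
    omega
  · -- every 2 gets paired
    intro j hj1 hj2
    obtain ⟨n, hn0⟩ := hT (j + 1)
    have hn : (j : ℝ) + 1 ≤ Tn n x := by exact_mod_cast hn0
    have hjn : j + 1 ≤ n := by
      have h2 := Tn_le n x
      have : (j + 1 : ℝ) ≤ (n : ℝ) := le_trans (by push_cast; linarith) h2
      exact_mod_cast this
    refine ⟨n, by omega, ?_⟩
    have hor := two_in_stack_or_paired (pre n x) j hj1
      (by rw [length_pre]; omega)
      (by rw [getD_pre (show j - 1 < n by omega)]; exact hj2)
    rcases hor with hst | hp
    · exfalso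
      have hle := stack_count_le (pre n x) hst
      set s := (pre n x).drop j with hs
      have hdec : pre n x = pre j x ++ s := pre_decomp (by omega) x
      have hlens : s.length = s.count 1 + s.count 2 := by
        apply length_eq_counts
        intro c hc
        apply pre_letters hx n
        rw [hdec]
        exact List.mem_append_right _ hc
      -- counts of slice
      have hcn := Tn_eq_counts hx n
      have hcj := Tn_eq_counts hx j
      have hc1 : (pre n x).count 1 = (pre j x).count 1 + s.count 1 := by
        rw [hdec, List.count_append]
      have hc2 : (pre n x).count 2 = (pre j x).count 2 + s.count 2 := by
        rw [hdec, List.count_append]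
      have hTj : Tn j x ≤ j := Tn_le j x
      have hslice : (s.count 2 : ℝ) + 1 ≤ (s.count 1 : ℝ) := by
        have h1 : (j + 1 : ℝ) ≤ Tn n x := hn
        rw [hcn] at h1
        rw [hcj] at hTj
        push_cast [hc1, hc2] at h1 ⊢
        linarith
      have : s.count 2 + 1 ≤ s.count 1 := by exact_mod_cast hslice
      omega
    · exact hp


lemma Yf_abs (n : ℕ) (x : ℕ → ℕ) : |Yf n x| = 1 := by
  unfold Yf; split <;> simp

def coordMS (i : ℕ) : MeasurableSpace (ℕ → ℕ) :=
  MeasurableSpace.comap (fun x => x i) inferInstance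

lemma coordMS_le (i : ℕ) : coordMS i ≤ (inferInstance : MeasurableSpace (ℕ → ℕ)) :=
  (measurable_pi_apply i).comap_le

def natFilt : Filtration ℕ (inferInstance : MeasurableSpace (ℕ → ℕ)) where
  seq n := ⨆ i ∈ Set.Iio n, coordMS i
  mono' := fun m n h => biSup_mono (fun i hi => lt_of_lt_of_le hi h)
  le' := fun n => iSup₂_le fun i _ => coordMS_le i

lemma coordMS_le_natFilt {i n : ℕ} (h : i < n) : coordMS i ≤ natFilt n := by
  have : coordMS i ≤ ⨆ j ∈ Set.Iio n, coordMS j := by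
    exact le_biSup _ h
  exact this

lemma measurable_coord_Yf (n : ℕ) : Measurable[coordMS n] (Yf n) := by
  have h1 : Measurable[coordMS n] (fun x : ℕ → ℕ => x n) :=
    Measurable.of_comap_le le_rfl
  have h2 : Measurable (fun k : ℕ => if k = 1 then (1 : ℝ) else -1) :=
    measurable_from_top
  exact h2.comp h1

lemma measurable_Yf (n : ℕ) : Measurable (Yf n) :=
  (measurable_coord_Yf n).mono (coordMS_le n) le_rfl

noncomputable def gL (L : ℕ) : ℕ → (ℕ → ℕ) → ℝ
  | 0 => fun _ => 0
  | n + 1 => fun x => if (L : ℝ) ≤ gL L n x then gL L n x else gL L n x + Yf n x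

lemma gL_le (L n : ℕ) (x : ℕ → ℕ) : gL L n x ≤ L + 1 := by
  induction n with
  | zero => simp [gL]; positivity
  | succ n IH =>
    show (if (L : ℝ) ≤ gL L n x then gL L n x else gL L n x + Yf n x) ≤ L + 1
    split
    · exact IH
    · rename_i h
      push_neg at h
      have := abs_le.1 (le_of_eq (Yf_abs n x))
      linarith

lemma gL_abs_le (L n : ℕ) (x : ℕ → ℕ) : |gL L n x| ≤ L + 1 + n := by
  induction n with
  | zero => simp [gL]; positivity
  | succ n IH =>
    push_cast
    show |if (L : ℝ) ≤ gL L n x then gL L n x else gL L n x + Yf n x| ≤ (L : ℝ) + 1 + ((n : ℝ) + 1)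
    have hy := abs_le.1 (le_of_eq (Yf_abs n x))
    have hg := abs_le.1 IH
    split <;> rw [abs_le] <;> constructor <;> push_cast at hg ⊢ <;> linarith

lemma measurable_filt_gL (L n : ℕ) : Measurable[natFilt n] (gL L n) := by
  induction n with
  | zero => exact measurable_const
  | succ n IH =>
    have hg : Measurable[natFilt (n + 1)] (gL L n) := IH.mono (natFilt.mono (by omega)) le_rfl
    have hY : Measurable[natFilt (n + 1)] (Yf n) :=
      (measurable_coord_Yf n).mono (coordMS_le_natFilt (by omega)) le_rfl
    have hset : MeasurableSet[natFilt (n + 1)] {x | (L : ℝ) ≤ gL L n x} :=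
      measurableSet_le measurable_const hg
    exact Measurable.ite hset hg (hg.add hY)

lemma measurable_gL (L n : ℕ) : Measurable (gL L n) :=
  (measurable_filt_gL L n).mono (natFilt.le n) le_rfl

variable {μ : Measure (ℕ → ℕ)} {p₁ p₂ : ℝ}

lemma integrable_Yf [IsProbabilityMeasure μ] (n : ℕ) : Integrable (Yf n) μ := by
  refine (integrable_const (1 : ℝ)).mono' (measurable_Yf n).aestronglyMeasurable ?_
  filter_upwards with x
  rw [Real.norm_eq_abs, Yf_abs]

lemma integrable_gL [IsProbabilityMeasure μ] (L n : ℕ) : Integrable (gL L n) μ := by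
  refine (integrable_const ((L : ℝ) + 1 + n)).mono'
    (measurable_gL L n).aestronglyMeasurable ?_
  filter_upwards with x
  rw [Real.norm_eq_abs]
  exact gL_abs_le L n x

lemma integral_Yf [IsProbabilityMeasure μ]
    (hm1 : ∀ n : ℕ, μ {x | x n = 1} = ENNReal.ofReal p₁)
    (hp1 : 0 ≤ p₁) (hsum : p₁ + p₂ = 1) (n : ℕ) :
    ∫ x, Yf n x ∂μ = p₁ - p₂ := by
  have hA : MeasurableSet {x : ℕ → ℕ | x n = 1} := by
    have : {x : ℕ → ℕ | x n = 1} = (fun x : ℕ → ℕ => x n) ⁻¹' {1} := rfl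
    rw [this]
    exact measurable_pi_apply n (measurableSet_singleton 1)
  have hYeq : Yf n = fun x =>
      2 * ({x : ℕ → ℕ | x n = 1}.indicator (fun _ => (1 : ℝ)) x) - 1 := by
    funext x
    by_cases h : x n = 1 <;> simp [Set.indicator_apply, Set.mem_setOf_eq, Yf, h] <;> norm_num
  rw [hYeq]
  have hind : Integrable ({x : ℕ → ℕ | x n = 1}.indicator (fun _ => (1 : ℝ))) μ :=
    (integrable_const (1 : ℝ)).indicator hA
  rw [integral_sub ((hind.const_mul 2)) (integrable_const 1), integral_const_mul,
    integral_indicator_const (1 : ℝ) hA, integral_const]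
  simp only [Measure.real, measure_univ, ENNReal.toReal_one, smul_eq_mul, mul_one, one_smul]
  rw [hm1 n, ENNReal.toReal_ofReal hp1]
  linarith

lemma indep_coord_natFilt
    (hInd : iIndepFun (fun n (x : ℕ → ℕ) => x n) μ)
    (n : ℕ) : Indep (coordMS n) (natFilt n) μ := by
  have h := indep_biSup_compl (fun i => coordMS_le i) hInd.iIndep (Set.Iio n)
  refine indep_of_indep_of_le_left h.symm ?_
  exact le_biSup _ (by simp : n ∈ (Set.Iio n)ᶜ)

lemma condexp_Yf [IsProbabilityMeasure μ]
    (hInd : iIndepFun (fun n (x : ℕ → ℕ) => x n) μ)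
    (hm1 : ∀ n : ℕ, μ {x | x n = 1} = ENNReal.ofReal p₁)
    (hp1 : 0 ≤ p₁) (hsum : p₁ + p₂ = 1) (n : ℕ) :
    μ[Yf n | natFilt n] =ᵐ[μ] fun _ => p₁ - p₂ := by
  have h := condExp_indep_eq (coordMS_le n) (natFilt.le n)
    (measurable_coord_Yf n).stronglyMeasurable (indep_coord_natFilt hInd n)
  rw [integral_Yf hm1 hp1 hsum n] at h
  exact h

lemma submartingale_gL [IsProbabilityMeasure μ]
    (hInd : iIndepFun (fun n (x : ℕ → ℕ) => x n) μ)
    (hm1 : ∀ n : ℕ, μ {x | x n = 1} = ENNReal.ofReal p₁)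
    (hp1 : 0 ≤ p₁) (hsum : p₁ + p₂ = 1) (h12 : p₂ ≤ p₁) (L : ℕ) :
    Submartingale (gL L) natFilt μ := by
  refine submartingale_nat (fun n => (measurable_filt_gL L n).stronglyMeasurable)
    (fun n => integrable_gL L n) (fun n => ?_)
  set A : Set (ℕ → ℕ) := {x | ¬ (L : ℝ) ≤ gL L n x} with hAdef
  have hAm : MeasurableSet[natFilt n] A :=
    (measurableSet_le measurable_const (measurable_filt_gL L n)).compl
  have hAm' : MeasurableSet A := natFilt.le n A hAm
  have hdecomp : gL L (n + 1) = gL L n + A.indicator (Yf n) := by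
    funext x
    show (if (L : ℝ) ≤ gL L n x then gL L n x else gL L n x + Yf n x) = _
    by_cases h : (L : ℝ) ≤ gL L n x
    · have hnm : x ∉ A := by rw [hAdef]; simp only [Set.mem_setOf_eq, not_not]; exact h
      rw [if_pos h, Pi.add_apply, Set.indicator_of_notMem hnm, add_zero]
    · have hmm : x ∈ A := by rw [hAdef]; exact h
      rw [if_neg h, Pi.add_apply, Set.indicator_of_mem hmm]
  have hmul : A.indicator (Yf n) = (A.indicator (fun _ => (1 : ℝ))) * Yf n := by
    funext x
    by_cases h : x ∈ A
    · simp [Set.indicator_of_mem h]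
    · simp [Set.indicator_of_notMem h]
  have hind_int : Integrable (A.indicator (Yf n)) μ := (integrable_Yf n).indicator hAm'
  have h1 : μ[gL L (n + 1) | natFilt n] =ᵐ[μ]
      μ[gL L n | natFilt n] + μ[A.indicator (Yf n) | natFilt n] := by
    rw [hdecomp]
    exact condExp_add (integrable_gL L n) hind_int _
  have h2 : μ[gL L n | natFilt n] =ᵐ[μ] gL L n := by
    rw [condExp_of_stronglyMeasurable (μ := μ) (natFilt.le n)
      (measurable_filt_gL L n).stronglyMeasurable (integrable_gL L n)]
  have h3 : μ[A.indicator (Yf n) | natFilt n] =ᵐ[μ]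
      (A.indicator (fun _ => (1 : ℝ))) * μ[Yf n | natFilt n] := by
    rw [hmul]
    refine condExp_mul_of_stronglyMeasurable_left
      (stronglyMeasurable_const.indicator hAm) ?_ (integrable_Yf n)
    rw [← hmul]
    exact hind_int
  have h4 := condexp_Yf hInd hm1 hp1 hsum n
  filter_upwards [h1, h2, h3, h4] with x hx1 hx2 hx3 hx4
  rw [hx1, Pi.add_apply, hx2, hx3, Pi.mul_apply, hx4]
  have h0 : (0 : ℝ) ≤ A.indicator (fun _ => (1 : ℝ)) x :=
    Set.indicator_nonneg (fun _ _ => zero_le_one) x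
  nlinarith [mul_nonneg h0 (by linarith : (0 : ℝ) ≤ p₁ - p₂)]

lemma integral_gL_nonneg [IsProbabilityMeasure μ]
    (hInd : iIndepFun (fun n (x : ℕ → ℕ) => x n) μ)
    (hm1 : ∀ n : ℕ, μ {x | x n = 1} = ENNReal.ofReal p₁)
    (hp1 : 0 ≤ p₁) (hsum : p₁ + p₂ = 1) (h12 : p₂ ≤ p₁) (L n : ℕ) :
    0 ≤ ∫ x, gL L n x ∂μ := by
  have hsub := submartingale_gL hInd hm1 hp1 hsum h12 L
  induction n with
  | zero => simp [gL]
  | succ n IH =>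
    have hstep : ∫ x, gL L n x ∂μ ≤ ∫ x, gL L (n + 1) x ∂μ := by
      have := hsub.setIntegral_le (Nat.le_succ n) (MeasurableSet.univ (α := ℕ → ℕ))
      simpa [setIntegral_univ] using this
    linarith

lemma eLpNorm_gL_le [IsProbabilityMeasure μ]
    (hInd : iIndepFun (fun n (x : ℕ → ℕ) => x n) μ)
    (hm1 : ∀ n : ℕ, μ {x | x n = 1} = ENNReal.ofReal p₁)
    (hp1 : 0 ≤ p₁) (hsum : p₁ + p₂ = 1) (h12 : p₂ ≤ p₁) (L n : ℕ) :
    eLpNorm (gL L n) 1 μ ≤ ENNReal.ofReal (2 * ((L : ℝ) + 1)) := by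
  rw [eLpNorm_one_eq_lintegral_enorm,
    ← ofReal_integral_norm_eq_lintegral_enorm (integrable_gL L n)]
  apply ENNReal.ofReal_le_ofReal
  have habs : ∫ x, ‖gL L n x‖ ∂μ ≤ ∫ x, (2 * ((L : ℝ) + 1) - gL L n x) ∂μ := by
    apply integral_mono (integrable_gL L n).norm
      ((integrable_const _).sub (integrable_gL L n))
    intro x
    have h1 := gL_le L n x
    show ‖gL L n x‖ ≤ 2 * ((L : ℝ) + 1) - gL L n x
    rw [Real.norm_eq_abs]
    rcases abs_cases (gL L n x) with ⟨he, _⟩ | ⟨he, _⟩ <;> rw [he]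
    · have : (0:ℝ) ≤ (L:ℝ) + 1 := by positivity
      linarith
    · nlinarith [gL_abs_le L n x]
  have hint : ∫ x, (2 * ((L : ℝ) + 1) - gL L n x) ∂μ
      = 2 * ((L : ℝ) + 1) - ∫ x, gL L n x ∂μ := by
    rw [integral_sub (integrable_const _) (integrable_gL L n), integral_const]
    simp [measure_univ]
  have hnn := integral_gL_nonneg hInd hm1 hp1 hsum h12 L n
  rw [hint] at habs
  linarith

/-- The key a.s. statement: the walk exceeds every level `L`. -/
lemma ae_hits [IsProbabilityMeasure μ]
    (hInd : iIndepFun (fun n (x : ℕ → ℕ) => x n) μ)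
    (hm1 : ∀ n : ℕ, μ {x | x n = 1} = ENNReal.ofReal p₁)
    (hp1 : 0 ≤ p₁) (hsum : p₁ + p₂ = 1) (h12 : p₂ ≤ p₁) (L : ℕ) :
    ∀ᵐ x ∂μ, ∃ n, (L : ℝ) ≤ Tn n x := by
  have hsub := submartingale_gL hInd hm1 hp1 hsum h12 L
  have hbdd : ∀ n, eLpNorm (gL L n) 1 μ ≤ (2 * ((L : ℝ) + 1)).toNNReal := by
    intro n
    have := eLpNorm_gL_le hInd hm1 hp1 hsum h12 L n
    rwa [ENNReal.ofReal] at this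
  filter_upwards [hsub.exists_ae_tendsto_of_bdd hbdd] with x hx
  by_contra hcon
  push_neg at hcon
  have hgT : ∀ n, gL L n x = Tn n x := by
    intro n
    induction n with
    | zero => simp [gL, Tn]
    | succ n IH =>
      show (if (L : ℝ) ≤ gL L n x then gL L n x else gL L n x + Yf n x) = Tn (n + 1) x
      rw [IH, if_neg (by push_neg; exact hcon n), Tn_succ]
  obtain ⟨c, hc⟩ := hx
  simp_rw [hgT] at hc
  have hcauchy := hc.cauchySeq
  rw [Metric.cauchySeq_iff] at hcauchy
  obtain ⟨N, hN⟩ := hcauchy 1 one_pos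
  have := hN (N + 1) (by omega) N (by omega)
  rw [Real.dist_eq, Tn_succ, add_sub_cancel_left, Yf_abs] at this
  exact lt_irrefl 1 this

lemma ae_letters [IsProbabilityMeasure μ]
    (hm1 : ∀ n : ℕ, μ {x | x n = 1} = ENNReal.ofReal p₁)
    (hm2 : ∀ n : ℕ, μ {x | x n = 2} = ENNReal.ofReal p₂)
    (hp1 : 0 ≤ p₁) (hp2 : 0 ≤ p₂) (hsum : p₁ + p₂ = 1) :
    ∀ᵐ x ∂μ, ∀ n, x n = 1 ∨ x n = 2 := by
  rw [ae_all_iff]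
  intro n
  have hA : MeasurableSet {x : ℕ → ℕ | x n = 1} :=
    measurable_pi_apply n (measurableSet_singleton 1)
  have hB : MeasurableSet {x : ℕ → ℕ | x n = 2} :=
    measurable_pi_apply n (measurableSet_singleton 2)
  have hdisj : Disjoint {x : ℕ → ℕ | x n = 1} {x : ℕ → ℕ | x n = 2} := by
    rw [Set.disjoint_left]
    intro x hx1 hx2
    simp only [Set.mem_setOf_eq] at hx1 hx2
    omega
  have hU : μ ({x : ℕ → ℕ | x n = 1} ∪ {x | x n = 2}) = 1 := by
    rw [measure_union hdisj hB, hm1, hm2, ← ENNReal.ofReal_add hp1 hp2, hsum,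
      ENNReal.ofReal_one]
  have hset : {x : ℕ → ℕ | ¬ (x n = 1 ∨ x n = 2)} =
      ({x : ℕ → ℕ | x n = 1} ∪ {x | x n = 2})ᶜ := by
    ext x
    simp [Set.mem_union, Set.mem_setOf_eq]
  rw [ae_iff, hset, prob_compl_eq_zero_iff (hA.union hB)]
  exact hU


end Aux

/-- in a two-letter Bernoulli ensemble with `p₁ ≥ p₂ > 0`, almost
every sequence has an initial segment with more `1`'s than `2`'s; consequently it
contains infinitely many free `1`'s and each `2` gets paired in some
sufficiently long initial segment. -/
theorem as_prefix_majority_free_ones_and_pairing (μ : Measure (ℕ → ℕ))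
    (p₁ p₂ : ℝ) (hμ : IsBernoulli2 μ p₁ p₂) (h12 : p₂ ≤ p₁) (h2 : 0 < p₂) :
    ∀ᵐ x ∂μ,
      (∃ n, (pre n x).count 2 < (pre n x).count 1) ∧
      {j : ℕ | 1 ≤ j ∧ x (j - 1) = 1 ∧
        ∃ M, ∀ N, M ≤ N → j ∉ pairedPositions (pre N x)}.Infinite ∧
      (∀ j, 1 ≤ j → x (j - 1) = 2 →
        ∃ N, j ≤ N ∧ j ∈ pairedPositions (pre N x)) := by
  obtain ⟨hP, hInd, hm1, hm2, hsum⟩ := hμ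
  haveI := hP
  have hp2 : 0 ≤ p₂ := le_of_lt h2
  have hp1 : 0 ≤ p₁ := le_trans hp2 h12
  have hltr := ae_letters hm1 hm2 hp1 hp2 hsum
  have hhits : ∀ᵐ x ∂μ, ∀ L : ℕ, ∃ n, (L : ℝ) ≤ Tn n x :=
    ae_all_iff.2 (fun L => ae_hits hInd hm1 hp1 hsum h12 L)
  filter_upwards [hltr, hhits] with x h1 h2'
  exact pointwise_main x h1 h2'

end RSKpaper
end
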